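/- For all positive integers u ≥ 2, s ≥ 0, and 1 ≤ t ≤ 2u − 2, the identity Σ_{k=us}^{us+⌊((t−1)u)/(2u−1)⌋} C(2us + t − k − 1, k) = Σ_{j=0}^{t−1} C(su + ⌊(tu + (u−1)j)/(2u−1)⌋ − 1, j) holds. -/

import Mathlib

open Finset

private lemma sum_range_pair (g : ℕ → ℕ) (c : ℕ) :
    ∑ j ∈ range (2*c), g j = ∑ b ∈ range c, (g (2*b) + g (2*b+1)) := by
  induction c with
  | zero => simp
  | succ c ih =>
      have h : 2 * (c+1) = (2*c + 1) + 1 := by ring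
      rw [h]
      simp only [Finset.sum_range_succ]
      rw [ih]
      omega

private lemma div1 (v t : ℕ) (ht1 : 1 ≤ t) (ht2 : t ≤ 2*v + 2) :
    (t - 1) * (v + 2) / (2 * (v + 2) - 1) = (t - 1) / 2 := by
  obtain ⟨m, rfl⟩ : ∃ m, t = m + 1 := ⟨t - 1, by omega⟩
  have h23 : 2 * (v + 2) - 1 = 2 * v + 3 := by omega
  have hm1 : m + 1 - 1 = m := by omega
  rw [h23, hm1]
  obtain ⟨q, r, hqr, hr2⟩ : ∃ q r, m = 2*q + r ∧ r < 2 := ⟨m/2, m%2, by omega, by omega⟩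
  have key : m * (v+2) = (r*(v+2) + q) + q * (2*v+3) := by rw [hqr]; ring
  have hlt : r*(v+2) + q < 2*v+3 := by interval_cases r <;> omega
  rw [key, Nat.add_mul_div_right _ _ (by omega : 0 < 2*v+3), Nat.div_eq_of_lt hlt]
  omega

private lemma div2 (v t j : ℕ) (htj : j < t) (ht2 : t ≤ 2*v + 2) :
    (t * (v + 2) + ((v + 2) - 1) * j) / (2 * (v + 2) - 1) = (t + j) / 2 := by
  have h23 : 2 * (v + 2) - 1 = 2 * v + 3 := by omega
  have h1 : (v + 2) - 1 = v + 1 := by omega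
  rw [h23, h1]
  obtain ⟨q, r, hqr, hr2⟩ : ∃ q r, t + j = 2*q + r ∧ r < 2 := ⟨(t+j)/2, (t+j)%2, by omega, by omega⟩
  obtain ⟨p, hp⟩ : ∃ p, q = j + p := ⟨q - j, by omega⟩
  have ht : t = j + 2*p + r := by omega
  have key : t * (v+2) + (v+1) * j = (r*(v+2) + p) + q * (2*v+3) := by rw [ht, hp]; ring
  have hlt : r*(v+2) + p < 2*v+3 := by interval_cases r <;> omega
  rw [key, Nat.add_mul_div_right _ _ (by omega : 0 < 2*v+3), Nat.div_eq_of_lt hlt]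
  omega

private lemma pair_step (n t b : ℕ) (hb : 2*b + 2 ≤ t) :
    (n + (t - 1 - b) - 1).choose (t - 2 - 2*b) + (n + (t - 1 - b) - 1).choose (t - 1 - 2*b)
      = (n + (t - 1 - b)).choose (n + b) := by
  obtain ⟨M, hM⟩ : ∃ M, n + (t - 1 - b) = M + 1 := ⟨n + (t-1-b) - 1, by omega⟩
  rw [hM]
  have e1 : M + 1 - 1 = M := by omega
  have e2 : t - 1 - 2*b = (t - 2 - 2*b) + 1 := by omega
  have e3 : n + b = (M + 1) - ((t - 2 - 2*b) + 1) := by omega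
  rw [e1, e2, e3, Nat.choose_symm (by omega : (t - 2 - 2*b) + 1 ≤ M + 1),
    Nat.choose_succ_succ]

private lemma key_id (n t : ℕ) (ht : 1 ≤ t) :
    ∑ j ∈ range t, (n + (t + j)/2 - 1).choose j
      = ∑ i ∈ range t, (n + (t - 1 - i)).choose (n + i) := by
  have step1 : ∑ j ∈ range t, (n + (t + j)/2 - 1).choose j
      = ∑ j ∈ range t, (n + (t - 1 - j/2) - 1).choose (t - 1 - j) := by
    rw [← Finset.sum_range_reflect (fun j => (n + (t + j)/2 - 1).choose j) t]
    refine Finset.sum_congr rfl fun j hj => ?_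
    rw [Finset.mem_range] at hj
    have : (t + (t - 1 - j))/2 = t - 1 - j/2 := by omega
    rw [this]
  rw [step1]
  obtain ⟨c, hc⟩ : ∃ c, t = 2*c ∨ t = 2*c + 1 := ⟨t/2, by omega⟩
  rcases hc with hc | hc <;> subst hc
  · -- even case t = 2c
    rw [sum_range_pair (fun j => (n + (2*c - 1 - j/2) - 1).choose (2*c - 1 - j)) c]
    rw [← Finset.sum_subset (Finset.range_subset_range.2 (by omega : c ≤ 2*c))
      (fun i hi hi' => Nat.choose_eq_zero_of_lt (by
        rw [Finset.mem_range] at hi hi'; omega))]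
    refine Finset.sum_congr rfl fun b hb => ?_
    rw [Finset.mem_range] at hb
    have e1 : 2*b/2 = b := by omega
    have e2 : (2*b+1)/2 = b := by omega
    have e3 : 2*c - 1 - (2*b+1) = 2*c - 2 - 2*b := by omega
    rw [e1, e2, e3, add_comm]
    exact pair_step n (2*c) b (by omega)
  · -- odd case t = 2c+1
    rw [Finset.sum_range_succ, sum_range_pair (fun j => (n + (2*c+1 - 1 - j/2) - 1).choose (2*c+1 - 1 - j)) c]
    rw [← Finset.sum_subset (Finset.range_subset_range.2 (by omega : c + 1 ≤ 2*c+1))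
      (fun i hi hi' => Nat.choose_eq_zero_of_lt (by
        rw [Finset.mem_range] at hi hi'; omega))]
    rw [Finset.sum_range_succ]
    congr 1
    · refine Finset.sum_congr rfl fun b hb => ?_
      rw [Finset.mem_range] at hb
      have e1 : 2*b/2 = b := by omega
      have e2 : (2*b+1)/2 = b := by omega
      have e3 : 2*c + 1 - 1 - (2*b+1) = 2*c+1 - 2 - 2*b := by omega
      rw [e1, e2, e3, add_comm]
      exact pair_step n (2*c+1) b (by omega)
    · have e1 : 2*c/2 = c := by omega
      have e2 : 2*c + 1 - 1 - 2*c = 0 := by omega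
      have e3 : 2*c + 1 - 1 - c = c := by omega
      rw [e1, e2, e3, Nat.choose_zero_right]
      exact (Nat.choose_self (n + c)).symm

theorem binomial_tail_identity (u s t : ℕ) (hu : 2 ≤ u) (ht1 : 1 ≤ t) (ht2 : t ≤ 2 * u - 2) :
    ∑ k ∈ Finset.Icc (u * s) (u * s + (t - 1) * u / (2 * u - 1)),
        (2 * u * s + t - k - 1).choose k =
      ∑ j ∈ Finset.range t, (s * u + (t * u + (u - 1) * j) / (2 * u - 1) - 1).choose j := by
  obtain ⟨v, rfl⟩ : ∃ v, u = v + 2 := ⟨u - 2, by omega⟩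
  have ht2' : t ≤ 2*v + 2 := by omega
  rw [div1 v t ht1 ht2']
  have hR : ∀ j ∈ Finset.range t,
      (s * (v+2) + (t * (v+2) + ((v+2) - 1) * j) / (2 * (v+2) - 1) - 1).choose j
        = ((v+2) * s + (t + j)/2 - 1).choose j := by
    intro j hj
    rw [Finset.mem_range] at hj
    rw [div2 v t j hj ht2', mul_comm s]
  rw [Finset.sum_congr rfl hR]
  obtain ⟨n, hn⟩ : ∃ n, n = (v+2) * s := ⟨_, rfl⟩
  have h2n : 2 * (v+2) * s = n + n := by rw [hn]; ring
  rw [← hn, h2n]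
  have hsub : Finset.Icc n (n + (t-1)/2) ⊆ Finset.Icc n (n + (t-1)) :=
    Finset.Icc_subset_Icc_right (by omega)
  rw [Finset.sum_subset hsub (fun k hk hk' => Nat.choose_eq_zero_of_lt (by
    rw [Finset.mem_Icc] at hk hk'; omega))]
  rw [← Finset.Ico_add_one_right_eq_Icc, Finset.sum_Ico_eq_sum_range]
  have hrt : n + (t - 1) + 1 - n = t := by omega
  rw [hrt, key_id n t ht1]
  refine Finset.sum_congr rfl fun i hi => ?_
  rw [Finset.mem_range] at hi
  congr 1
  omega
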